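/- Let ℰ be a coarse structure on a set X and let ℰ_cn be the connected coarse structure generated by ℰ. Then for every n ∈ ℕ, asdim(X,ℰ) ≤ n if and only if asdim(X,ℰ_cn) ≤ n. -/

import Mathlib

/-- A coarse structure on a set `X`. -/
structure CoarseStruct (X : Type*) where
  IsEntourage : Set (X × X) → Prop
  subset_mem : ∀ ⦃E F : Set (X × X)⦄, IsEntourage F → E ⊆ F → IsEntourage E
  union_mem : ∀ ⦃E F : Set (X × X)⦄, IsEntourage E → IsEntourage F → IsEntourage (E ∪ F)
  diagonal_mem : IsEntourage {p | p.1 = p.2}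
  inv_mem : ∀ ⦃E : Set (X × X)⦄, IsEntourage E → IsEntourage {p | (p.2, p.1) ∈ E}
  comp_mem : ∀ ⦃E F : Set (X × X)⦄, IsEntourage E → IsEntourage F →
      IsEntourage {p | ∃ y, (p.1, y) ∈ E ∧ (y, p.2) ∈ F}

namespace CoarseStruct

variable {X Y : Type*}

/-- `f` is coarsely uniform if images of entourages are entourages. -/
def CoarselyUniform (ℰ : CoarseStruct X) (ℱ : CoarseStruct Y) (f : X → Y) : Prop :=
  ∀ ⦃E⦄, ℰ.IsEntourage E → ℱ.IsEntourage (Prod.map f f '' E)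

/-- `f` is a coarse embedding if it is coarsely uniform and preimages of entourages
are entourages. -/
def CoarseEmbedding (ℰ : CoarseStruct X) (ℱ : CoarseStruct Y) (f : X → Y) : Prop :=
  CoarselyUniform ℰ ℱ f ∧ ∀ ⦃F⦄, ℱ.IsEntourage F → ℰ.IsEntourage (Prod.map f f ⁻¹' F)

/-- Two maps into `X` are close if `{(f s, g s) : s ∈ S}` is an entourage. -/
def Close (ℰ : CoarseStruct X) {S : Type*} (f g : S → X) : Prop :=
  ℰ.IsEntourage (Set.range fun s => (f s, g s))

/-- A set is bounded if it is contained in `E(x)` for some entourage `E` and point `x`. -/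
def IsBounded (ℰ : CoarseStruct X) (B : Set X) : Prop :=
  ∃ E x, ℰ.IsEntourage E ∧ B ⊆ {y | (y, x) ∈ E}

/-- `f` is coarsely proper if preimages of bounded sets are bounded. -/
def CoarselyProper (ℰ : CoarseStruct X) (ℱ : CoarseStruct Y) (f : X → Y) : Prop :=
  ∀ ⦃B⦄, IsBounded ℱ B → IsBounded ℰ (f ⁻¹' B)

/-- A coarse map is coarsely uniform and coarsely proper. -/
def CoarseMap (ℰ : CoarseStruct X) (ℱ : CoarseStruct Y) (f : X → Y) : Prop :=
  CoarselyUniform ℰ ℱ f ∧ CoarselyProper ℰ ℱ f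

/-- A coarse equivalence is a coarse map with a coarse inverse up to closeness. -/
def CoarseEquivalence (ℰ : CoarseStruct X) (ℱ : CoarseStruct Y) (f : X → Y) : Prop :=
  CoarseMap ℰ ℱ f ∧ ∃ g : Y → X, CoarseMap ℱ ℰ g ∧
    Close ℰ (g ∘ f) id ∧ Close ℱ (f ∘ g) id

/-- `E(x) = {y : (y,x) ∈ E}`. -/
def ball (E : Set (X × X)) (x : X) : Set X := {y | (y, x) ∈ E}

/-- `𝒰` is a cover of `X`. -/
def IsCover (𝒰 : Set (Set X)) : Prop := ∀ x : X, ∃ U ∈ 𝒰, x ∈ U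

/-- `𝒰` is uniformly bounded if `⋃_{U ∈ 𝒰} U × U` is an entourage. -/
def UniformlyBounded (ℰ : CoarseStruct X) (𝒰 : Set (Set X)) : Prop :=
  ℰ.IsEntourage (⋃ U ∈ 𝒰, U ×ˢ U)

/-- `𝒰` has appetite `L` if every `L(x)` is contained in some member of `𝒰`. -/
def HasAppetite (𝒰 : Set (Set X)) (L : Set (X × X)) : Prop :=
  ∀ x : X, ∃ U ∈ 𝒰, ball L x ⊆ U

/-- The multiplicity of `𝒰` is at most `m`: at most `m` members of `𝒰` share a point. -/
def MultiplicityLE (𝒰 : Set (Set X)) (m : ℕ) : Prop :=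
  ∀ x : X, {U | U ∈ 𝒰 ∧ x ∈ U}.encard ≤ (m : ℕ∞)

/-- `asdim (X, ℰ) ≤ n`. -/
def AsdimLE (ℰ : CoarseStruct X) (n : ℕ) : Prop :=
  ∀ ⦃L⦄, ℰ.IsEntourage L → ∃ 𝒰 : Set (Set X),
    IsCover 𝒰 ∧ UniformlyBounded ℰ 𝒰 ∧ HasAppetite 𝒰 L ∧ MultiplicityLE 𝒰 (n + 1)

end CoarseStruct


namespace CoarseStruct

/-- A coarse structure is connected if every point of `X × X` lies in some entourage. -/
def IsConnected {X : Type*} (ℰ : CoarseStruct X) : Prop :=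
  ∀ p : X × X, ∃ E, ℰ.IsEntourage E ∧ p ∈ E

/-- `ℰ ≤ ℱ` : every `ℰ`-entourage is an `ℱ`-entourage. -/
def LE {X : Type*} (ℰ ℱ : CoarseStruct X) : Prop :=
  ∀ ⦃E⦄, ℰ.IsEntourage E → ℱ.IsEntourage E

end CoarseStruct

namespace CoarseStruct

variable {X : Type*}

/-- The empty set is an entourage. -/
lemma ent_empty (ℰ : CoarseStruct X) : ℰ.IsEntourage (∅ : Set (X × X)) :=
  ℰ.subset_mem ℰ.diagonal_mem (by simp)

/-- Finite unions of entourages are entourages. -/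
lemma ent_biUnion (ℰ : CoarseStruct X) {ι : Type*} {t : Set ι} (ht : t.Finite)
    {f : ι → Set (X × X)} (hf : ∀ i ∈ t, ℰ.IsEntourage (f i)) :
    ℰ.IsEntourage (⋃ i ∈ t, f i) := by
  refine Set.Finite.induction_on
    (motive := fun t _ => (∀ i ∈ t, ℰ.IsEntourage (f i)) → ℰ.IsEntourage (⋃ i ∈ t, f i)) t ht
    (fun _ => by simpa using ℰ.ent_empty) ?_ hf
  intro a s _ _ ih h
  rw [Set.biUnion_insert]
  exact ℰ.union_mem (h _ (Set.mem_insert _ _))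
    (ih fun i hi => h i (Set.mem_insert_of_mem _ hi))

/-- A finite set of pairs, each of which lies in some entourage, is an entourage. -/
lemma ent_of_finite (ℰ : CoarseStruct X) {F : Set (X × X)} (hF : F.Finite)
    (h : ∀ p ∈ F, ∃ E, ℰ.IsEntourage E ∧ p ∈ E) : ℰ.IsEntourage F := by
  classical
  set f : X × X → Set (X × X) := fun p =>
    if hp : ∃ E, ℰ.IsEntourage E ∧ p ∈ E then hp.choose else ∅ with hfdef
  have hsub : F ⊆ ⋃ p ∈ F, f p := by
    intro p hp
    have hex := h p hp
    refine Set.mem_biUnion hp ?_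
    simp only [hfdef, dif_pos hex]
    exact hex.choose_spec.2
  refine ℰ.subset_mem (ℰ.ent_biUnion hF fun p hp => ?_) hsub
  have hex := h p hp
  simp only [hfdef, dif_pos hex]
  exact hex.choose_spec.1

/-- `K` is contained in a finite union of `ℰ`-bounded sets. -/
def FinBdd (ℰ : CoarseStruct X) (K : Set X) : Prop :=
  ∃ (s : Set X) (E : Set (X × X)), s.Finite ∧ ℰ.IsEntourage E ∧ K ⊆ ⋃ x ∈ s, ball E x

lemma FinBdd.mono {ℰ : CoarseStruct X} {K K' : Set X} (h : FinBdd ℰ K) (hs : K' ⊆ K) :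
    FinBdd ℰ K' := by
  obtain ⟨s, E, hs', hE, hK⟩ := h
  exact ⟨s, E, hs', hE, hs.trans hK⟩

lemma finBdd_empty (ℰ : CoarseStruct X) : FinBdd ℰ (∅ : Set X) :=
  ⟨∅, ∅, Set.finite_empty, ℰ.ent_empty, by simp⟩

lemma FinBdd.union {ℰ : CoarseStruct X} {K K' : Set X} (h : FinBdd ℰ K) (h' : FinBdd ℰ K') :
    FinBdd ℰ (K ∪ K') := by
  obtain ⟨s, E, hsf, hE, hK⟩ := h
  obtain ⟨s', E', hsf', hE', hK'⟩ := h'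
  refine ⟨s ∪ s', E ∪ E', hsf.union hsf', ℰ.union_mem hE hE', ?_⟩
  rintro x (hx | hx)
  · obtain ⟨a, ha, hxa⟩ := by simpa using hK hx
    exact Set.mem_biUnion (Set.mem_union_left _ ha) (Set.mem_union_left _ hxa)
  · obtain ⟨a, ha, hxa⟩ := by simpa using hK' hx
    exact Set.mem_biUnion (Set.mem_union_right _ ha) (Set.mem_union_right _ hxa)

/-- Images of `FinBdd` sets under entourages are `FinBdd`. -/
lemma FinBdd.image {ℰ : CoarseStruct X} {K : Set X} (h : FinBdd ℰ K)
    {F : Set (X × X)} (hF : ℰ.IsEntourage F) :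
    FinBdd ℰ {y | ∃ k ∈ K, (y, k) ∈ F} := by
  obtain ⟨s, E, hsf, hE, hK⟩ := h
  refine ⟨s, {p | ∃ z, (p.1, z) ∈ F ∧ (z, p.2) ∈ E}, hsf, ℰ.comp_mem hF hE, ?_⟩
  rintro y ⟨k, hk, hyk⟩
  obtain ⟨a, ha, hka⟩ := by simpa using hK hk
  exact Set.mem_biUnion ha ⟨k, hyk, hka⟩

lemma finBdd_pair (ℰ : CoarseStruct X) (x y : X) : FinBdd ℰ ({x, y} : Set X) := by
  refine ⟨{x, y}, {p | p.1 = p.2}, (Set.finite_singleton y).insert x, ℰ.diagonal_mem, ?_⟩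
  rintro z (rfl | rfl)
  · exact Set.mem_biUnion (Set.mem_insert _ _) rfl
  · exact Set.mem_biUnion (Set.mem_insert_of_mem _ rfl) rfl

/-- The connected coarse structure built from `ℰ` by adding products of bounded sets. -/
def conGen (ℰ : CoarseStruct X) : CoarseStruct X where
  IsEntourage D := ∃ E K, ℰ.IsEntourage E ∧ FinBdd ℰ K ∧ D ⊆ E ∪ K ×ˢ K
  subset_mem := by
    rintro D F ⟨E, K, hE, hK, hF⟩ hDF
    exact ⟨E, K, hE, hK, hDF.trans hF⟩
  union_mem := by
    rintro D D' ⟨E, K, hE, hK, hD⟩ ⟨E', K', hE', hK', hD'⟩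
    refine ⟨E ∪ E', K ∪ K', ℰ.union_mem hE hE', hK.union hK', ?_⟩
    rintro p (hp | hp)
    · rcases hD hp with h | h
      · exact Or.inl (Or.inl h)
      · exact Or.inr ⟨Or.inl h.1, Or.inl h.2⟩
    · rcases hD' hp with h | h
      · exact Or.inl (Or.inr h)
      · exact Or.inr ⟨Or.inr h.1, Or.inr h.2⟩
  diagonal_mem := ⟨{p | p.1 = p.2}, ∅, ℰ.diagonal_mem, ℰ.finBdd_empty, by simp⟩
  inv_mem := by
    rintro D ⟨E, K, hE, hK, hD⟩
    refine ⟨{p | (p.2, p.1) ∈ E}, K, ℰ.inv_mem hE, hK, ?_⟩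
    rintro ⟨x, y⟩ hp
    rcases hD hp with h | h
    · exact Or.inl h
    · exact Or.inr ⟨h.2, h.1⟩
  comp_mem := by
    rintro D D' ⟨E, K, hE, hK, hD⟩ ⟨E', K', hE', hK', hD'⟩
    refine ⟨{p | ∃ y, (p.1, y) ∈ E ∧ (y, p.2) ∈ E'},
      (K ∪ K') ∪ ({y | ∃ k ∈ K', (y, k) ∈ E} ∪
        {y | ∃ k ∈ K, (y, k) ∈ {p : X × X | (p.2, p.1) ∈ E'}}),
      ℰ.comp_mem hE hE',
      (hK.union hK').union ((hK'.image hE).union (hK.image (ℰ.inv_mem hE'))), ?_⟩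
    rintro ⟨x, z⟩ ⟨y, hxy, hyz⟩
    rcases hD hxy with h1 | h1 <;> rcases hD' hyz with h2 | h2
    · exact Or.inl ⟨y, h1, h2⟩
    · -- (x,y) ∈ E, y,z ∈ K' : x ∈ E[K'], z ∈ K'
      exact Or.inr ⟨Or.inr (Or.inl ⟨y, h2.1, h1⟩), Or.inl (Or.inr h2.2)⟩
    · -- x,y ∈ K, (y,z) ∈ E' : x ∈ K, z ∈ E'ᵀ[K]
      exact Or.inr ⟨Or.inl (Or.inl h1.1), Or.inr (Or.inr ⟨y, h1.2, h2⟩)⟩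
    · exact Or.inr ⟨Or.inl (Or.inl h1.1), Or.inl (Or.inr h2.2)⟩

lemma conGen_connected (ℰ : CoarseStruct X) : IsConnected (conGen ℰ) := by
  intro p
  refine ⟨{p}, ⟨∅, {p.1, p.2}, ℰ.ent_empty, ℰ.finBdd_pair p.1 p.2, ?_⟩, rfl⟩
  rintro q rfl
  exact Or.inr ⟨by simp, by simp⟩

lemma le_conGen (ℰ : CoarseStruct X) : LE ℰ (conGen ℰ) := by
  intro E hE
  exact ⟨E, ∅, hE, ℰ.finBdd_empty, by simp⟩

/-- A product of two `FinBdd` sets is an entourage in any connected structure above `ℰ`. -/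
lemma prod_ent {ℰ ℱ : CoarseStruct X} (hc : IsConnected ℱ) (hle : LE ℰ ℱ)
    {K K' : Set X} (hK : FinBdd ℰ K) (hK' : FinBdd ℰ K') :
    ℱ.IsEntourage (K ×ˢ K') := by
  obtain ⟨s, G, hsf, hG, hKs⟩ := hK
  obtain ⟨s', G', hsf', hG', hKs'⟩ := hK'
  set f : X × X → Set (X × X) := fun p =>
    {q | ∃ y, (q.1, y) ∈ G ∧ (y, q.2) ∈
      {r | ∃ y', (r.1, y') ∈ (hc p).choose ∧ (y', r.2) ∈ {w : X × X | (w.2, w.1) ∈ G'}}}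
    with hfdef
  have hfent : ∀ p ∈ s ×ˢ s', ℱ.IsEntourage (f p) := fun p _ =>
    ℱ.comp_mem (hle hG) (ℱ.comp_mem (hc p).choose_spec.1 (ℱ.inv_mem (hle hG')))
  refine ℱ.subset_mem (ℱ.ent_biUnion (hsf.prod hsf') hfent) ?_
  rintro ⟨u, v⟩ ⟨hu, hv⟩
  obtain ⟨a, ha, hua⟩ := by simpa using hKs hu
  obtain ⟨b, hb, hvb⟩ := by simpa using hKs' hv
  refine Set.mem_biUnion (Set.mk_mem_prod ha hb) ?_
  exact ⟨a, hua, b, (hc (a, b)).choose_spec.2, hvb⟩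

end CoarseStruct
open CoarseStruct in
/-- Passing to the connected coarse structure generated by `ℰ` does not change
the asymptotic dimension. -/
theorem asdim_connected_generated {X : Type*} (ℰ ℰcn : CoarseStruct X)
    (hcn : IsConnected ℰcn) (hle : LE ℰ ℰcn)
    (hmin : ∀ 𝒟 : CoarseStruct X, IsConnected 𝒟 → LE ℰ 𝒟 → LE ℰcn 𝒟) :
    ∀ n : ℕ, AsdimLE ℰ n ↔ AsdimLE ℰcn n := by
  classical
  intro n
  have hkey : ∀ ⦃F⦄, ℰcn.IsEntourage F →
      ∃ E K, ℰ.IsEntourage E ∧ FinBdd ℰ K ∧ F ⊆ E ∪ K ×ˢ K :=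
    hmin (conGen ℰ) ℰ.conGen_connected ℰ.le_conGen
  constructor
  · -- forward direction
    intro hA L hL
    obtain ⟨E, K, hE, hK, hLsub⟩ := hkey hL
    obtain ⟨𝒰, hcov, hub, happ, hmult⟩ := hA hE
    set F𝒰 : Set (X × X) := ⋃ U ∈ 𝒰, U ×ˢ U with hFdef
    have hubF : ℰ.IsEntourage F𝒰 := hub
    set T : Set X := K ∪ {y | ∃ k ∈ K, (y, k) ∈ E} with hTdef
    set T' : Set X := T ∪ ⋃₀ {U | U ∈ 𝒰 ∧ (U ∩ T).Nonempty} with hT'def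
    set 𝒱 : Set (Set X) := {U | U ∈ 𝒰 ∧ U ∩ T = ∅} ∪ {T'} with h𝒱def
    have hTfb : FinBdd ℰ T := hK.union (hK.image hE)
    have hT'fb : FinBdd ℰ T' := by
      refine (hTfb.union (hTfb.image hubF)).mono ?_
      rintro y (hy | hy)
      · exact Or.inl hy
      · obtain ⟨U, ⟨hU, t, htU, htT⟩, hyU⟩ := hy
        exact Or.inr ⟨t, htT, Set.mem_biUnion hU ⟨hyU, htU⟩⟩
    refine ⟨𝒱, ?_, ?_, ?_, ?_⟩
    · -- cover
      intro x
      obtain ⟨U, hU, hxU⟩ := hcov x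
      by_cases hUT : U ∩ T = ∅
      · exact ⟨U, Or.inl ⟨hU, hUT⟩, hxU⟩
      · exact ⟨T', Or.inr rfl, Or.inr
          ⟨U, ⟨hU, Set.nonempty_iff_ne_empty.2 hUT⟩, hxU⟩⟩
    · -- uniformly bounded
      refine ℰcn.subset_mem
        (ℰcn.union_mem (hle hubF) (prod_ent hcn hle hT'fb hT'fb)) ?_
      intro p hp
      obtain ⟨V, hV, hpV⟩ := Set.mem_iUnion₂.1 hp
      rcases hV with ⟨hU, -⟩ | hV
      · exact Or.inl (Set.mem_biUnion hU hpV)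
      · rw [Set.mem_singleton_iff] at hV
        subst hV
        exact Or.inr hpV
    · -- appetite
      intro x
      by_cases hxK : x ∈ K
      · refine ⟨T', Or.inr rfl, ?_⟩
        intro y hy
        rcases hLsub hy with h | h
        · exact Or.inl (Or.inr ⟨x, hxK, h⟩)
        · exact Or.inl (Or.inl h.1)
      · obtain ⟨U, hU, hUb⟩ := happ x
        by_cases hUT : U ∩ T = ∅
        · refine ⟨U, Or.inl ⟨hU, hUT⟩, ?_⟩
          intro y hy
          rcases hLsub hy with h | h
          · exact hUb h
          · exact absurd h.2 hxK
        · refine ⟨T', Or.inr rfl, ?_⟩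
          intro y hy
          rcases hLsub hy with h | h
          · exact Or.inr ⟨U, ⟨hU, Set.nonempty_iff_ne_empty.2 hUT⟩, hUb h⟩
          · exact absurd h.2 hxK
    · -- multiplicity
      intro z
      by_cases hz : ∃ U₀, U₀ ∈ 𝒰 ∧ z ∈ U₀ ∧ (U₀ ∩ T).Nonempty
      · obtain ⟨U₀, hU₀, hzU₀, hU₀T⟩ := hz
        set g : Set X → Set X := fun V => if V = T' then U₀ else V with hgdef
        have hVmem : ∀ V, V ∈ 𝒱 → V ≠ T' → V ∈ 𝒰 ∧ V ∩ T = ∅ := by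
          rintro V (h | h) hne
          · exact h
          · exact absurd h hne
        have himg : g '' {V | V ∈ 𝒱 ∧ z ∈ V} ⊆ {U | U ∈ 𝒰 ∧ z ∈ U} := by
          rintro W ⟨V, ⟨hV, hzV⟩, rfl⟩
          by_cases hVT : V = T'
          · simpa [hgdef, hVT] using ⟨hU₀, hzU₀⟩
          · simpa [hgdef, hVT] using ⟨(hVmem V hV hVT).1, hzV⟩
        have hinj : Set.InjOn g {V | V ∈ 𝒱 ∧ z ∈ V} := by
          rintro V₁ ⟨hV₁, -⟩ V₂ ⟨hV₂, -⟩ hg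
          by_cases e₁ : V₁ = T' <;> by_cases e₂ : V₂ = T'
          · rw [e₁, e₂]
          · exfalso
            have hg' : U₀ = V₂ := by simpa [hgdef, e₁, e₂] using hg
            exact absurd ((hVmem V₂ hV₂ e₂).2) (by
              rw [← hg']; exact Set.nonempty_iff_ne_empty.1 hU₀T)
          · exfalso
            have hg' : V₁ = U₀ := by simpa [hgdef, e₁, e₂] using hg
            exact absurd ((hVmem V₁ hV₁ e₁).2) (by
              rw [hg']; exact Set.nonempty_iff_ne_empty.1 hU₀T)
          · rw [hgdef] at hg
            simpa [e₁, e₂] using hg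
        calc {V | V ∈ 𝒱 ∧ z ∈ V}.encard
            = (g '' {V | V ∈ 𝒱 ∧ z ∈ V}).encard := (hinj.encard_image).symm
          _ ≤ {U | U ∈ 𝒰 ∧ z ∈ U}.encard := Set.encard_le_encard himg
          _ ≤ ((n + 1 : ℕ) : ℕ∞) := hmult z
      · by_cases hzT : z ∈ T
        · have hsub : {V | V ∈ 𝒱 ∧ z ∈ V} ⊆ {T'} := by
            rintro V ⟨hV | hV, hzV⟩
            · exact absurd (Set.eq_empty_iff_forall_notMem.1 hV.2 z) (by
                simp [hzV, hzT])
            · exact hV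
          refine le_trans (Set.encard_le_encard hsub) ?_
          rw [Set.encard_singleton]
          exact_mod_cast Nat.one_le_iff_ne_zero.2 (Nat.succ_ne_zero n)
        · have hzT' : z ∉ T' := by
            rintro (h | h)
            · exact hzT h
            · obtain ⟨U, ⟨hU, hne⟩, hzU⟩ := h
              exact hz ⟨U, hU, hzU, hne⟩
          have hsub : {V | V ∈ 𝒱 ∧ z ∈ V} ⊆ {U | U ∈ 𝒰 ∧ z ∈ U} := by
            rintro V ⟨hV | hV, hzV⟩
            · exact ⟨hV.1, hzV⟩
            · rw [Set.mem_singleton_iff] at hV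
              subst hV
              exact absurd hzV hzT'
          exact le_trans (Set.encard_le_encard hsub) (hmult z)
  · -- backward direction
    intro hA L hL
    obtain ⟨𝒱, hcov, hub, happ, hmult⟩ := hA (hle hL)
    obtain ⟨E, K, hE, hK, hFsub⟩ := hkey hub
    obtain ⟨s, G, hsf, hG, hKs⟩ := hK
    set Rel : X → X → Prop := fun x y => ∃ E', ℰ.IsEntourage E' ∧ (x, y) ∈ E'
      with hReldef
    have hrefl : ∀ x, Rel x x := fun x => ⟨{p | p.1 = p.2}, ℰ.diagonal_mem, rfl⟩
    have hsymm : ∀ {x y}, Rel x y → Rel y x := by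
      rintro x y ⟨E', hE', h⟩
      exact ⟨{p | (p.2, p.1) ∈ E'}, ℰ.inv_mem hE', h⟩
    have htrans : ∀ {x y z}, Rel x y → Rel y z → Rel x z := by
      rintro x y z ⟨E₁, h₁, m₁⟩ ⟨E₂, h₂, m₂⟩
      exact ⟨{p | ∃ w, (p.1, w) ∈ E₁ ∧ (w, p.2) ∈ E₂}, ℰ.comp_mem h₁ h₂, ⟨y, m₁, m₂⟩⟩
    set cmp : X → Set X := fun x => {y | Rel x y} with hcmpdef
    have hcmpeq : ∀ {x z}, Rel x z → cmp x = cmp z := by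
      intro x z h
      ext y
      exact ⟨fun hy => htrans (hsymm h) hy, fun hy => htrans h hy⟩
    set 𝒲 : Set (Set X) := {W | ∃ V ∈ 𝒱, ∃ x, W = V ∩ cmp x} with h𝒲def
    refine ⟨𝒲, ?_, ?_, ?_, ?_⟩
    · -- cover
      intro x
      obtain ⟨V, hV, hxV⟩ := hcov x
      exact ⟨V ∩ cmp x, ⟨V, hV, x, rfl⟩, hxV, hrefl x⟩
    · -- uniformly bounded
      set H : Set (X × X) := (s ×ˢ s) ∩ {p | Rel p.1 p.2} with hHdef
      have hH : ℰ.IsEntourage H :=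
        ℰ.ent_of_finite ((hsf.prod hsf).subset Set.inter_subset_left)
          (fun p hp => hp.2)
      refine ℰ.subset_mem (ℰ.union_mem hE (ℰ.comp_mem hG
        (ℰ.comp_mem hH (ℰ.inv_mem hG)))) ?_
      rintro ⟨u, v⟩ hp
      obtain ⟨W, hW, hpW⟩ := Set.mem_iUnion₂.1 hp
      obtain ⟨V, hV, x, rfl⟩ := hW
      have huv : (u, v) ∈ ⋃ V ∈ 𝒱, V ×ˢ V :=
        Set.mem_biUnion hV ⟨hpW.1.1, hpW.2.1⟩
      rcases hFsub huv with h | ⟨hu, hv⟩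
      · exact Or.inl h
      · obtain ⟨a, ha, hua⟩ := Set.mem_iUnion₂.1 (hKs hu)
        obtain ⟨b, hb, hvb⟩ := Set.mem_iUnion₂.1 (hKs hv)
        have hab : Rel a b :=
          htrans (hsymm ⟨G, hG, hua⟩)
            (htrans (hsymm hpW.1.2) (htrans hpW.2.2 ⟨G, hG, hvb⟩))
        exact Or.inr ⟨a, hua, b, ⟨⟨ha, hb⟩, hab⟩, hvb⟩
    · -- appetite
      intro x
      obtain ⟨V, hV, hVb⟩ := happ x
      exact ⟨V ∩ cmp x, ⟨V, hV, x, rfl⟩,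
        fun y hy => ⟨hVb hy, hsymm ⟨L, hL, hy⟩⟩⟩
    · -- multiplicity
      intro z
      have hsub : {W | W ∈ 𝒲 ∧ z ∈ W} ⊆
          (fun V => V ∩ cmp z) '' {V | V ∈ 𝒱 ∧ z ∈ V} := by
        rintro W ⟨⟨V, hV, x, rfl⟩, hzW⟩
        exact ⟨V, ⟨hV, hzW.1⟩, by rw [hcmpeq hzW.2]⟩
      exact le_trans (Set.encard_le_encard hsub)
        (le_trans (Set.encard_image_le _ _) (hmult z))
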